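/- The constant function 1 belongs to the local BMO-type space bmo^Φ(ℝⁿ) with ‖1‖_{bmo^Φ} = log(1+e), but 1 does not belong to bmo^{log}(ℝⁿ). Consequently bmo^{log}(ℝⁿ) ⊊ bmo^Φ(ℝⁿ) (assuming the inclusion bmo^{log} ⊂ bmo^Φ). -/

import Mathlib

open MeasureTheory

/-- The axis-parallel closed cube with lower corner `a` and side length `ℓ`. -/
def cube {n : ℕ} (a : Fin n → ℝ) (ℓ : ℝ) : Set (EuclideanSpace ℝ (Fin n)) :=
  {x | ∀ i, a i ≤ x i ∧ x i ≤ a i + ℓ}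

/-- The average of `f` over a set `Q`. -/
noncomputable def cubeAvg {n : ℕ} (f : EuclideanSpace ℝ (Fin n) → ℝ)
    (Q : Set (EuclideanSpace ℝ (Fin n))) : ℝ :=
  ((volume Q).toReal)⁻¹ * ∫ x in Q, f x

/-- Values of the oscillation part (ℓ(Q) < 1) of the bmo^Φ norm of `f`. -/
def SPhiOsc {n : ℕ} (f : EuclideanSpace ℝ (Fin n) → ℝ) : Set ℝ :=
  {v | ∃ (a : Fin n → ℝ) (ℓ : ℝ), 0 < ℓ ∧ ℓ < 1 ∧
    v = Real.log (Real.exp 1 + ((volume (cube a ℓ)).toReal)⁻¹) /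
        (volume (cube a ℓ)).toReal *
      ∫ x in cube a ℓ, |f x - cubeAvg f (cube a ℓ)|}

/-- Values of the global part (ℓ(Q) ≥ 1) of the bmo^Φ norm of `f`. -/
def SPhiGlob {n : ℕ} (f : EuclideanSpace ℝ (Fin n) → ℝ) : Set ℝ :=
  {v | ∃ (a : Fin n → ℝ) (ℓ : ℝ), 1 ≤ ℓ ∧
    v = Real.log (Real.exp 1 + ((volume (cube a ℓ)).toReal)⁻¹) /
        (volume (cube a ℓ)).toReal *
      ∫ x in cube a ℓ, |f x|}

/-- Values of the oscillation part (ℓ(Q) < 1) of the bmo^{log} norm of `f`. -/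
noncomputable def SLogOsc {n : ℕ} (f : EuclideanSpace ℝ (Fin n) → ℝ) : Set ℝ :=
  {v | ∃ (a : Fin n → ℝ) (ℓ : ℝ), 0 < ℓ ∧ ℓ < 1 ∧
    v = (Real.log (Real.exp 1 + ((volume (cube a ℓ)).toReal)⁻¹) +
          sSup ((fun x : EuclideanSpace ℝ (Fin n) =>
            Real.log (Real.exp 1 + ‖x‖)) '' cube a ℓ)) /
        (volume (cube a ℓ)).toReal *
      ∫ x in cube a ℓ, |f x - cubeAvg f (cube a ℓ)|}

/-- Values of the global part (ℓ(Q) ≥ 1) of the bmo^{log} norm of `f`. -/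
noncomputable def SLogGlob {n : ℕ} (f : EuclideanSpace ℝ (Fin n) → ℝ) : Set ℝ :=
  {v | ∃ (a : Fin n → ℝ) (ℓ : ℝ), 1 ≤ ℓ ∧
    v = (Real.log (Real.exp 1 + ((volume (cube a ℓ)).toReal)⁻¹) +
          sSup ((fun x : EuclideanSpace ℝ (Fin n) =>
            Real.log (Real.exp 1 + ‖x‖)) '' cube a ℓ)) /
        (volume (cube a ℓ)).toReal *
      ∫ x in cube a ℓ, |f x|}

/-- Membership in bmo^Φ(ℝⁿ): both suprema in the norm are finite. -/
def memBmoPhi {n : ℕ} (f : EuclideanSpace ℝ (Fin n) → ℝ) : Prop :=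
  BddAbove (SPhiOsc f) ∧ BddAbove (SPhiGlob f)

/-- Membership in bmo^{log}(ℝⁿ): both suprema in the norm are finite. -/
def memBmoLog {n : ℕ} (f : EuclideanSpace ℝ (Fin n) → ℝ) : Prop :=
  BddAbove (SLogOsc f) ∧ BddAbove (SLogGlob f)


section Aux
variable {n : ℕ}

lemma volume_cube (a : Fin n → ℝ) (ℓ : ℝ) :
    volume (cube a ℓ) = ENNReal.ofReal ℓ ^ n := by
  have h : cube a ℓ
      = (MeasurableEquiv.toLp 2 (Fin n → ℝ)).symm ⁻¹'
        (Set.univ.pi fun i => Set.Icc (a i) (a i + ℓ)) := by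
    ext x
    simp [cube, Set.mem_pi, MeasurableEquiv.toLp, Set.mem_Icc, Pi.le_def,
      forall_and]
    rfl
  rw [h, (EuclideanSpace.volume_preserving_symm_measurableEquiv_toLp (Fin n)).measure_preimage
    (MeasurableSet.univ_pi fun i => measurableSet_Icc).nullMeasurableSet]
  rw [volume_pi_pi]
  simp [Real.volume_Icc]

lemma volume_cube_toReal (a : Fin n → ℝ) {ℓ : ℝ} (hℓ : 0 ≤ ℓ) :
    (volume (cube a ℓ)).toReal = ℓ ^ n := by
  rw [volume_cube]
  simp [ENNReal.toReal_pow, ENNReal.toReal_ofReal hℓ]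

lemma integral_one_cube (a : Fin n → ℝ) {ℓ : ℝ} (hℓ : 0 ≤ ℓ) :
    ∫ _ in cube a ℓ, (1:ℝ) = ℓ ^ n := by
  rw [setIntegral_const, measureReal_def, volume_cube_toReal a hℓ]; simp

lemma cubeAvg_one (a : Fin n → ℝ) {ℓ : ℝ} (hℓ : 0 < ℓ) :
    cubeAvg (fun _ => (1:ℝ)) (cube a ℓ) = 1 := by
  unfold cubeAvg
  rw [integral_one_cube a hℓ.le, volume_cube_toReal a hℓ.le]
  have : ℓ ^ n ≠ 0 := by positivity
  field_simp

lemma norm_le_of_mem_cube {a : Fin n → ℝ} {ℓ : ℝ} (hℓ : 0 ≤ ℓ)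
    {x : EuclideanSpace ℝ (Fin n)} (hx : x ∈ cube a ℓ) :
    ‖x‖ ≤ Real.sqrt (∑ i, (|a i| + ℓ)^2) := by
  rw [EuclideanSpace.norm_eq]
  apply Real.sqrt_le_sqrt
  apply Finset.sum_le_sum
  intro i _
  have h := hx i
  have habs : |x i| ≤ |a i| + ℓ := by
    rw [abs_le]; constructor
    · linarith [neg_abs_le (a i)]
    · linarith [le_abs_self (a i)]
  rw [Real.norm_eq_abs]
  exact pow_le_pow_left₀ (abs_nonneg _) habs 2

lemma bddAbove_log_image (a : Fin n → ℝ) {ℓ : ℝ} (hℓ : 0 ≤ ℓ) :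
    BddAbove ((fun x : EuclideanSpace ℝ (Fin n) =>
      Real.log (Real.exp 1 + ‖x‖)) '' cube a ℓ) := by
  refine ⟨Real.log (Real.exp 1 + Real.sqrt (∑ i, (|a i| + ℓ)^2)), ?_⟩
  rintro v ⟨x, hx, rfl⟩
  have h2 := norm_le_of_mem_cube hℓ hx
  have h1 : (0:ℝ) < Real.exp 1 + ‖x‖ := by positivity
  exact Real.log_le_log h1 (by linarith)

lemma corner_norm_ge {R : ℝ} (hR : 0 ≤ R) (hn : 0 < n)
    {x : EuclideanSpace ℝ (Fin n)} (hx : ∀ i, x i = R) : R ≤ ‖x‖ := by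
  rw [EuclideanSpace.norm_eq]
  have h : R = Real.sqrt (R^2) := (Real.sqrt_sq hR).symm
  nth_rewrite 1 [h]
  apply Real.sqrt_le_sqrt
  calc R^2 = ‖x ⟨0, hn⟩‖^2 := by rw [hx ⟨0, hn⟩, Real.norm_eq_abs, sq_abs]
  _ ≤ ∑ i : Fin n, ‖x i‖^2 :=
      Finset.single_le_sum (f := fun i => ‖x i‖^2) (fun i _ => by positivity)
        (Finset.mem_univ (⟨0, hn⟩ : Fin n))

end Aux

/-- The constant function 1 belongs to bmo^Φ(ℝⁿ) with ‖1‖_{bmo^Φ} = log(1+e), but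
1 ∉ bmo^{log}(ℝⁿ); consequently, if bmo^{log} ⊂ bmo^Φ then the inclusion is strict. -/
theorem one_mem_bmoPhi_not_bmoLog (n : ℕ) (hn : 0 < n) :
    memBmoPhi (fun _ : EuclideanSpace ℝ (Fin n) => (1:ℝ)) ∧
    sSup (SPhiOsc (fun _ : EuclideanSpace ℝ (Fin n) => (1:ℝ))) +
      sSup (SPhiGlob (fun _ : EuclideanSpace ℝ (Fin n) => (1:ℝ))) =
        Real.log (1 + Real.exp 1) ∧
    ¬ memBmoLog (fun _ : EuclideanSpace ℝ (Fin n) => (1:ℝ)) ∧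
    ((∀ f : EuclideanSpace ℝ (Fin n) → ℝ, memBmoLog f → memBmoPhi f) →
      {f : EuclideanSpace ℝ (Fin n) → ℝ | memBmoLog f} ⊂
        {f : EuclideanSpace ℝ (Fin n) → ℝ | memBmoPhi f}) := by
  set f : EuclideanSpace ℝ (Fin n) → ℝ := fun _ => 1 with hf
  -- The oscillation part is identically zero
  have hOsc : SPhiOsc f = {0} := by
    ext v
    constructor
    · rintro ⟨a, ℓ, h0, h1, rfl⟩
      simp [hf, cubeAvg_one a h0]
    · rintro rfl
      refine ⟨fun _ => 0, 1/2, by norm_num, by norm_num, ?_⟩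
      rw [cubeAvg_one _ (by norm_num : (0:ℝ) < 1/2)]
      simp [hf]
  have hint : ∀ (a : Fin n → ℝ) {ℓ : ℝ}, 0 ≤ ℓ →
      (∫ x in cube a ℓ, |f x|) = ℓ ^ n := by
    intro a ℓ hℓ
    simpa [hf] using integral_one_cube a hℓ
  have hGlob : IsGreatest (SPhiGlob f) (Real.log (Real.exp 1 + 1)) := by
    constructor
    · refine ⟨fun _ => 0, 1, le_refl 1, ?_⟩
      rw [volume_cube_toReal _ zero_le_one, hint _ zero_le_one]
      norm_num
    · rintro v ⟨a, ℓ, hℓ, rfl⟩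
      have hℓ0 : (0:ℝ) ≤ ℓ := le_trans zero_le_one hℓ
      have hpow : (1:ℝ) ≤ ℓ ^ n := by
        calc (1:ℝ) = 1 ^ n := (one_pow n).symm
        _ ≤ ℓ ^ n := pow_le_pow_left₀ zero_le_one hℓ n
      rw [volume_cube_toReal a hℓ0, hint a hℓ0,
        div_mul_cancel₀ _ (by positivity : ℓ ^ n ≠ 0)]
      apply Real.log_le_log (by positivity)
      have hinv : (ℓ ^ n)⁻¹ ≤ 1 := by
        rw [inv_le_one_iff₀]; right; exact hpow
      linarith
  have hPhi : memBmoPhi f := by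
    constructor
    · rw [hOsc]; exact bddAbove_singleton
    · exact hGlob.bddAbove
  have hSum : sSup (SPhiOsc f) + sSup (SPhiGlob f) = Real.log (1 + Real.exp 1) := by
    rw [hOsc, csSup_singleton, hGlob.csSup_eq, zero_add, add_comm]
  have hNotLog : ¬ memBmoLog f := by
    rintro ⟨-, hB⟩
    obtain ⟨M, hM⟩ := hB
    set R : ℝ := Real.exp (M + 1) with hR
    have hR0 : (0:ℝ) < R := Real.exp_pos _
    set a : Fin n → ℝ := fun _ => R with ha
    have hv : (Real.log (Real.exp 1 + ((volume (cube a 1)).toReal)⁻¹) +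
          sSup ((fun x : EuclideanSpace ℝ (Fin n) =>
            Real.log (Real.exp 1 + ‖x‖)) '' cube a 1)) /
        (volume (cube a 1)).toReal *
      ∫ x in cube a 1, |f x| ≤ M := hM ⟨a, 1, le_refl 1, rfl⟩
    rw [volume_cube_toReal a zero_le_one, hint a zero_le_one] at hv
    simp only [one_pow, inv_one, div_one, mul_one] at hv
    -- lower bound on the sSup of the log factor
    obtain ⟨x₀, hx₀⟩ : ∃ x : EuclideanSpace ℝ (Fin n), ∀ i, x i = R :=
      ⟨WithLp.toLp 2 (fun _ => R), fun _ => rfl⟩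
    have hcorner : x₀ ∈ cube a 1 := by
      intro i
      rw [hx₀ i]
      constructor
      · exact le_refl _
      · show R ≤ R + 1; linarith
    have hS : Real.log (Real.exp 1 + R) ≤
        sSup ((fun x : EuclideanSpace ℝ (Fin n) =>
          Real.log (Real.exp 1 + ‖x‖)) '' cube a 1) := by
      have h1 : Real.log (Real.exp 1 + ‖x₀‖) ≤
          sSup ((fun x : EuclideanSpace ℝ (Fin n) =>
            Real.log (Real.exp 1 + ‖x‖)) '' cube a 1) :=
        le_csSup (bddAbove_log_image a zero_le_one) (Set.mem_image_of_mem _ hcorner)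
      refine le_trans ?_ h1
      apply Real.log_le_log (by positivity)
      have h2 := corner_norm_ge hR0.le hn hx₀
      linarith
    have hlogR : M + 1 ≤ Real.log (Real.exp 1 + R) := by
      have h2 : Real.log R ≤ Real.log (Real.exp 1 + R) :=
        Real.log_le_log hR0 (by linarith [Real.exp_pos 1])
      rw [hR, Real.log_exp] at h2
      exact h2
    have hlog1 : (0:ℝ) ≤ Real.log (Real.exp 1 + 1) :=
      Real.log_nonneg (by linarith [Real.exp_pos 1])
    linarith
  refine ⟨hPhi, hSum, hNotLog, ?_⟩
  intro H
  rw [Set.ssubset_def]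
  refine ⟨fun g hg => H g hg, fun hsub => hNotLog (hsub hPhi)⟩
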